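/- Under the λ-weight axioms, for neighbours x ∼ y: g(x,x)g(y,y) = g(x,y)·(1/p(x,y) + g(y,x)), where g(x,y) = f(x,y)/(λ - u(y,y)). -/

import Mathlib

/-- Under the λ-weight axioms, for neighbours `x ∼ y`:
`g(x,x)g(y,y) = g(x,y)(1/p(x,y) + g(y,x))`, where `g(x,y) = f(x,y)/(λ - u(y,y))`. -/
theorem stmt13 {V : Type*} [Countable V] (G : SimpleGraph V) (hT : G.IsTree)
    (p : V → V → ℝ)
    (hpadj : ∀ x y, 0 < p x y ↔ G.Adj x y)
    (hp0 : ∀ x y, ¬ G.Adj x y → p x y = 0)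
    (hstoch : ∀ x, HasSum (fun y => p x y) 1)
    (lam : ℂ) (f : V → V → ℂ) (u : V → ℂ)
    (hu : ∀ x, HasSum (fun v => (p x v : ℂ) * f v x) (u x))
    (hne1 : ∀ x y, G.Adj x y → f x y * f y x ≠ 1)
    (hnela : ∀ x, u x ≠ lam)
    (hla : ∀ x y, G.Adj x y →
      lam * f x y = (p x y : ℂ) + (u x - (p x y : ℂ) * f y x) * f x y)
    (g : V → V → ℂ)
    (hg : ∀ x y, G.Adj x y → g x y = f x y / (lam - u y))
    (hgdiag : ∀ x, g x x = 1 / (lam - u x))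
    (x y : V) (hxy : G.Adj x y) :
    g x x * g y y = g x y * (1 / (p x y : ℂ) + g y x) := by
  have hp : (p x y : ℂ) ≠ 0 := by
    exact_mod_cast ((hpadj x y).mpr hxy).ne'
  have hx : lam - u x ≠ 0 := sub_ne_zero.mpr (Ne.symm (hnela x))
  have hy : lam - u y ≠ 0 := sub_ne_zero.mpr (Ne.symm (hnela y))
  have key2 : f x y * (lam - u x) + (p x y : ℂ) * (f x y * f y x) = (p x y : ℂ) := by
    linear_combination hla x y hxy
  rw [hg x y hxy, hg y x hxy.symm, hgdiag, hgdiag]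
  field_simp
  linear_combination -key2
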